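/- Let A be a σ-unital C*-algebra, and let Tₙ, T be normal elements of the multiplier algebra M(A) whose spectra are all contained in a fixed compact set K ⊆ ℂ. If Tₙ → T in the strict topology, then f(Tₙ) → f(T) in the strict topology for every continuous function f : K → ℂ. -/

import Mathlib

open Filter Topology
open scoped MultiplierAlgebra

def StrictTendsto {A : Type*} [NonUnitalCStarAlgebra A]
    (T : ℕ → 𝓜(ℂ, A)) (L : 𝓜(ℂ, A)) : Prop :=
  ∀ a : A,
    Tendsto (fun n => ‖(T n - L) * (a : 𝓜(ℂ, A))‖) atTop (𝓝 0) ∧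
    Tendsto (fun n => ‖(a : 𝓜(ℂ, A)) * (T n - L)‖) atTop (𝓝 0)

/-- `A` is σ-unital: it admits a countable (sequential) approximate identity. -/
def SigmaUnital (A : Type*) [NonUnitalCStarAlgebra A] : Prop :=
  ∃ e : ℕ → A, ∀ a : A,
    Tendsto (fun n => ‖a - a * e n‖) atTop (𝓝 0) ∧
    Tendsto (fun n => ‖a - e n * a‖) atTop (𝓝 0)

open scoped Classical in
noncomputable def extFun (K : Set ℂ) (g : C(K, ℂ)) : ℂ → ℂ :=
  fun z => if h : z ∈ K then g ⟨z, h⟩ else 0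

lemma extFun_eq {K : Set ℂ} (g : C(K, ℂ)) {z : ℂ} (hz : z ∈ K) :
    extFun K g z = g ⟨z, hz⟩ := by simp [extFun, hz]

lemma extFun_continuousOn {K : Set ℂ} (g : C(K, ℂ)) : ContinuousOn (extFun K g) K := by
  rw [continuousOn_iff_continuous_restrict]
  have : K.domRestrict (extFun K g) = g := funext fun x => by
    simp only [Set.domRestrict_apply, extFun, x.2, dif_pos]
  rw [this]
  exact g.continuous

lemma extFun_add {K : Set ℂ} (g₁ g₂ : C(K, ℂ)) :
    extFun K (g₁ + g₂) = fun z => extFun K g₁ z + extFun K g₂ z := by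
  funext z
  by_cases hz : z ∈ K <;> simp [extFun, hz]

lemma extFun_mul {K : Set ℂ} (g₁ g₂ : C(K, ℂ)) :
    extFun K (g₁ * g₂) = fun z => extFun K g₁ z * extFun K g₂ z := by
  funext z
  by_cases hz : z ∈ K <;> simp [extFun, hz]

lemma extFun_sub {K : Set ℂ} (g₁ g₂ : C(K, ℂ)) :
    extFun K (g₁ - g₂) = fun z => extFun K g₁ z - extFun K g₂ z := by
  funext z
  by_cases hz : z ∈ K <;> simp [extFun, hz]

section Multiplier

variable {A : Type*} [NonUnitalCStarAlgebra A]


private lemma eq_zero_left {x : A} (h : ∀ c : A, c * x = 0) : x = 0 := by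
  have h1 : ‖x‖ * ‖x‖ = 0 := by
    rw [← CStarRing.norm_star_mul_self, h (star x), norm_zero]
  simpa using mul_self_eq_zero.mp h1

private lemma eq_zero_right {x : A} (h : ∀ c : A, x * c = 0) : x = 0 := by
  have h1 : ‖x‖ * ‖x‖ = 0 := by
    rw [← CStarRing.norm_self_mul_star, h (star x), norm_zero]
  simpa using mul_self_eq_zero.mp h1

lemma mul_coe_eq (T : 𝓜(ℂ, A)) (a : A) :
    T * (a : 𝓜(ℂ, A)) = ((T.fst a : A) : 𝓜(ℂ, A)) := by
  apply DoubleCentralizer.ext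
  apply Prod.ext
  · ext b
    show T.fst (a * b) = T.fst a * b
    have : ∀ c : A, c * (T.fst (a * b) - T.fst a * b) = 0 := by
      intro c
      rw [mul_sub, ← T.central c (a * b), ← mul_assoc, T.central c a, mul_assoc, sub_self]
    have := eq_zero_left this
    rwa [sub_eq_zero] at this
  · ext b
    show T.snd b * a = b * T.fst a
    exact T.central b a

lemma coe_mul_eq (T : 𝓜(ℂ, A)) (a : A) :
    (a : 𝓜(ℂ, A)) * T = ((T.snd a : A) : 𝓜(ℂ, A)) := by
  apply DoubleCentralizer.ext
  apply Prod.ext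
  · ext b
    show a * T.fst b = T.snd a * b
    exact (T.central a b).symm
  · ext b
    show T.snd (b * a) = b * T.snd a
    have : ∀ c : A, (T.snd (b * a) - b * T.snd a) * c = 0 := by
      intro c
      rw [sub_mul, T.central (b * a) c, mul_assoc, ← T.central a c, ← mul_assoc, sub_self]
    have := eq_zero_right this
    rwa [sub_eq_zero] at this

lemma coe_star_eq (a : A) :
    ((star a : A) : 𝓜(ℂ, A)) = star (a : 𝓜(ℂ, A)) :=
  map_star (DoubleCentralizer.coeHom (𝕜 := ℂ) (A := A)) a

private lemma tendsto_zero_of_ev (u : ℕ → ℝ) (hu : ∀ n, 0 ≤ u n)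
    (h : ∀ ε : ℝ, 0 < ε → ∀ᶠ n in atTop, u n < ε) : Tendsto u atTop (𝓝 0) := by
  rw [Metric.tendsto_atTop]
  intro ε hε
  obtain ⟨N, hN⟩ := eventually_atTop.mp (h ε hε)
  exact ⟨N, fun n hn => by rw [Real.dist_eq, sub_zero, abs_of_nonneg (hu n)]; exact hN n hn⟩

lemma StrictTendsto.refl (C : 𝓜(ℂ, A)) : StrictTendsto (fun _ => C) C := by
  intro a
  constructor <;> · simp only [sub_self, zero_mul, mul_zero, norm_zero]; exact tendsto_const_nhds

lemma StrictTendsto.add {S S' : ℕ → 𝓜(ℂ, A)} {L L' : 𝓜(ℂ, A)}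
    (h : StrictTendsto S L) (h' : StrictTendsto S' L') :
    StrictTendsto (fun n => S n + S' n) (L + L') := by
  intro a
  constructor
  · refine squeeze_zero (fun n => norm_nonneg _)
      (g := fun n => ‖(S n - L) * (a : 𝓜(ℂ, A))‖ + ‖(S' n - L') * (a : 𝓜(ℂ, A))‖) (fun n => ?_) ?_
    · rw [show S n + S' n - (L + L') = (S n - L) + (S' n - L') by abel, add_mul]
      exact norm_add_le _ _
    · simpa using (h a).1.add (h' a).1
  · refine squeeze_zero (fun n => norm_nonneg _)
      (g := fun n => ‖(a : 𝓜(ℂ, A)) * (S n - L)‖ + ‖(a : 𝓜(ℂ, A)) * (S' n - L')‖) (fun n => ?_) ?_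
    · rw [show S n + S' n - (L + L') = (S n - L) + (S' n - L') by abel, mul_add]
      exact norm_add_le _ _
    · simpa using (h a).2.add (h' a).2

lemma StrictTendsto.star {S : ℕ → 𝓜(ℂ, A)} {L : 𝓜(ℂ, A)} (h : StrictTendsto S L) :
    StrictTendsto (fun n => Star.star (S n)) (Star.star L) := by
  intro a
  constructor
  · have key : ∀ n, (Star.star (S n) - Star.star L) * (a : 𝓜(ℂ, A)) =
        Star.star (((Star.star a : A) : 𝓜(ℂ, A)) * (S n - L)) := by
      intro n
      rw [star_mul, coe_star_eq, star_star, star_sub]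
    simp only [key, norm_star]
    exact (h (Star.star a)).2
  · have key : ∀ n, (a : 𝓜(ℂ, A)) * (Star.star (S n) - Star.star L) =
        Star.star ((S n - L) * ((Star.star a : A) : 𝓜(ℂ, A))) := by
      intro n
      rw [star_mul, coe_star_eq, star_star, star_sub]
    simp only [key, norm_star]
    exact (h (Star.star a)).1

lemma lmul_aux {S S' : ℕ → 𝓜(ℂ, A)} {L L' : 𝓜(ℂ, A)}
    (hS : StrictTendsto S L) (hS' : StrictTendsto S' L') {M : ℝ}
    (hM : ∀ n, ‖S n‖ ≤ M) (a : A) :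
    Tendsto (fun n => ‖(S n * S' n - L * L') * (a : 𝓜(ℂ, A))‖) atTop (𝓝 0) := by
  have key : ∀ n, (S n * S' n - L * L') * (a : 𝓜(ℂ, A)) =
      S n * ((S' n - L') * (a : 𝓜(ℂ, A))) + (S n - L) * ((L'.fst a : A) : 𝓜(ℂ, A)) := by
    intro n
    rw [← mul_coe_eq]
    noncomm_ring
  refine squeeze_zero (fun n => norm_nonneg _)
    (g := fun n => M * ‖(S' n - L') * (a : 𝓜(ℂ, A))‖ +
      ‖(S n - L) * ((L'.fst a : A) : 𝓜(ℂ, A))‖) (fun n => ?_) ?_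
  · rw [key n]
    refine (norm_add_le _ _).trans (add_le_add ?_ le_rfl)
    exact (norm_mul_le _ _).trans (mul_le_mul_of_nonneg_right (hM n) (norm_nonneg _))
  · simpa using ((hS' a).1.const_mul M).add (hS (L'.fst a)).1

lemma StrictTendsto.mul {S S' : ℕ → 𝓜(ℂ, A)} {L L' : 𝓜(ℂ, A)}
    (hS : StrictTendsto S L) (hS' : StrictTendsto S' L') {M : ℝ}
    (hM : ∀ n, ‖S n‖ ≤ M) (hM' : ∀ n, ‖S' n‖ ≤ M) :
    StrictTendsto (fun n => S n * S' n) (L * L') := by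
  intro a
  constructor
  · exact lmul_aux hS hS' hM a
  · have h1 := lmul_aux hS'.star hS.star (M := M)
      (fun n => by simpa using hM' n) (Star.star a)
    have key : (fun n => ‖(a : 𝓜(ℂ, A)) * (S n * S' n - L * L')‖) =
        fun n => ‖(Star.star (S' n) * Star.star (S n) - Star.star L' * Star.star L) *
          ((Star.star a : A) : 𝓜(ℂ, A))‖ := by
      funext n
      rw [← norm_star, star_mul, star_sub, star_mul, star_mul, coe_star_eq]
    rw [key]
    exact h1

lemma strict_close {S : ℕ → 𝓜(ℂ, A)} {L : 𝓜(ℂ, A)}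
    (h : ∀ ε : ℝ, 0 < ε → ∃ S' : ℕ → 𝓜(ℂ, A), ∃ L' : 𝓜(ℂ, A), StrictTendsto S' L' ∧
      (∀ n, ‖S n - S' n‖ ≤ ε) ∧ ‖L - L'‖ ≤ ε) : StrictTendsto S L := by
  intro a
  have key : ∀ (c : 𝓜(ℂ, A)) (S' : ℕ → 𝓜(ℂ, A)) (L' : 𝓜(ℂ, A)) (n : ℕ),
      ‖(S n - L) * c‖ ≤ ‖S n - S' n‖ * ‖c‖ + ‖(S' n - L') * c‖ + ‖L - L'‖ * ‖c‖ ∧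
      ‖c * (S n - L)‖ ≤ ‖c‖ * ‖S n - S' n‖ + ‖c * (S' n - L')‖ + ‖c‖ * ‖L - L'‖ := by
    intro c S' L' n
    have e : S n - L = (S n - S' n) + (S' n - L') - (L - L') := by abel
    constructor
    · calc ‖(S n - L) * c‖ = ‖(S n - S' n) * c + (S' n - L') * c - (L - L') * c‖ := by
            rw [e]; noncomm_ring
        _ ≤ ‖(S n - S' n) * c + (S' n - L') * c‖ + ‖(L - L') * c‖ := norm_sub_le _ _
        _ ≤ ‖(S n - S' n) * c‖ + ‖(S' n - L') * c‖ + ‖(L - L') * c‖ := by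
            gcongr; exact norm_add_le _ _
        _ ≤ ‖S n - S' n‖ * ‖c‖ + ‖(S' n - L') * c‖ + ‖L - L'‖ * ‖c‖ := by
            gcongr <;> exact norm_mul_le _ _
    · calc ‖c * (S n - L)‖ = ‖c * (S n - S' n) + c * (S' n - L') - c * (L - L')‖ := by
            rw [e]; noncomm_ring
        _ ≤ ‖c * (S n - S' n) + c * (S' n - L')‖ + ‖c * (L - L')‖ := norm_sub_le _ _
        _ ≤ ‖c * (S n - S' n)‖ + ‖c * (S' n - L')‖ + ‖c * (L - L')‖ := by
            gcongr; exact norm_add_le _ _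
        _ ≤ ‖c‖ * ‖S n - S' n‖ + ‖c * (S' n - L')‖ + ‖c‖ * ‖L - L'‖ := by
            gcongr <;> exact norm_mul_le _ _
  constructor
  · refine tendsto_zero_of_ev _ (fun n => norm_nonneg _) (fun ε hε => ?_)
    have hδ : 0 < ε / 4 / (‖(a : 𝓜(ℂ, A))‖ + 1) := by positivity
    obtain ⟨S', L', hst, h1, h2⟩ := h _ hδ
    have hmid := (hst a).1
    have hb : ∀ n, ‖S n - S' n‖ * ‖(a : 𝓜(ℂ, A))‖ ≤ ε / 4 := by
      intro n
      calc ‖S n - S' n‖ * ‖(a : 𝓜(ℂ, A))‖ ≤ (ε / 4 / (‖(a : 𝓜(ℂ, A))‖ + 1)) * (‖(a : 𝓜(ℂ, A))‖ + 1) := by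
            exact mul_le_mul (h1 n) (by linarith [norm_nonneg (a : 𝓜(ℂ, A))]) (norm_nonneg _) hδ.le
        _ = ε / 4 := div_mul_cancel₀ _ (by positivity)
    have hb' : ‖L - L'‖ * ‖(a : 𝓜(ℂ, A))‖ ≤ ε / 4 := by
      calc ‖L - L'‖ * ‖(a : 𝓜(ℂ, A))‖ ≤ (ε / 4 / (‖(a : 𝓜(ℂ, A))‖ + 1)) * (‖(a : 𝓜(ℂ, A))‖ + 1) := by
            exact mul_le_mul h2 (by linarith [norm_nonneg (a : 𝓜(ℂ, A))]) (norm_nonneg _) hδ.le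
        _ = ε / 4 := div_mul_cancel₀ _ (by positivity)
    filter_upwards [hmid.eventually (gt_mem_nhds (by linarith : (0:ℝ) < ε / 4))] with n hn
    have := (key (a : 𝓜(ℂ, A)) S' L' n).1
    linarith [hb n]
  · refine tendsto_zero_of_ev _ (fun n => norm_nonneg _) (fun ε hε => ?_)
    have hδ : 0 < ε / 4 / (‖(a : 𝓜(ℂ, A))‖ + 1) := by positivity
    obtain ⟨S', L', hst, h1, h2⟩ := h _ hδ
    have hmid := (hst a).2
    have hb : ∀ n, ‖(a : 𝓜(ℂ, A))‖ * ‖S n - S' n‖ ≤ ε / 4 := by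
      intro n
      calc ‖(a : 𝓜(ℂ, A))‖ * ‖S n - S' n‖ ≤ (‖(a : 𝓜(ℂ, A))‖ + 1) * (ε / 4 / (‖(a : 𝓜(ℂ, A))‖ + 1)) := by
            exact mul_le_mul (by linarith [norm_nonneg (a : 𝓜(ℂ, A))]) (h1 n) (norm_nonneg _) (by positivity)
        _ = ε / 4 := by rw [mul_comm]; exact div_mul_cancel₀ _ (by positivity)
    have hb' : ‖(a : 𝓜(ℂ, A))‖ * ‖L - L'‖ ≤ ε / 4 := by
      calc ‖(a : 𝓜(ℂ, A))‖ * ‖L - L'‖ ≤ (‖(a : 𝓜(ℂ, A))‖ + 1) * (ε / 4 / (‖(a : 𝓜(ℂ, A))‖ + 1)) := by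
            exact mul_le_mul (by linarith [norm_nonneg (a : 𝓜(ℂ, A))]) h2 (norm_nonneg _) (by positivity)
        _ = ε / 4 := by rw [mul_comm]; exact div_mul_cancel₀ _ (by positivity)
    filter_upwards [hmid.eventually (gt_mem_nhds (by linarith : (0:ℝ) < ε / 4))] with n hn
    have := (key (a : 𝓜(ℂ, A)) S' L' n).2
    linarith [hb n]

end Multiplier

theorem stmt_15 {A : Type*} [NonUnitalCStarAlgebra A] (hσ : SigmaUnital A)
    (T : ℕ → 𝓜(ℂ, A)) (L : 𝓜(ℂ, A))
    (hTn : ∀ n, IsStarNormal (T n)) (hLn : IsStarNormal L)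
    (K : Set ℂ) (hK : IsCompact K)
    (hspec : ∀ n, spectrum ℂ (T n) ⊆ K) (hspecL : spectrum ℂ L ⊆ K)
    (hstrict : StrictTendsto T L) (f : ℂ → ℂ) (hf : ContinuousOn f K) :
    StrictTendsto (fun n => cfc f (T n)) (cfc f L) := by
  have hcs : CompactSpace K := isCompact_iff_compactSpace.mp hK
  have hcT : ∀ (g : C(K, ℂ)) n, ContinuousOn (extFun K g) (spectrum ℂ (T n)) :=
    fun g n => (extFun_continuousOn g).mono (hspec n)
  have hcL : ∀ g : C(K, ℂ), ContinuousOn (extFun K g) (spectrum ℂ L) :=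
    fun g => (extFun_continuousOn g).mono hspecL
  have hnorm : ∀ (g : C(K, ℂ)) (x : 𝓜(ℂ, A)), IsStarNormal x → spectrum ℂ x ⊆ K →
      ‖cfc (extFun K g) x‖ ≤ ‖g‖ := by
    intro g x hx hsp
    refine norm_cfc_le (norm_nonneg g) (fun z hz => ?_)
    rw [extFun_eq g (hsp hz)]
    exact g.norm_coe_le_norm _
  have key : ∀ g : C(K, ℂ),
      StrictTendsto (fun n => cfc (extFun K g) (T n)) (cfc (extFun K g) L) := by
    intro g
    refine ContinuousMap.induction_on_of_compact ?_ ?_ ?_ ?_ ?_ ?_ g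
    · -- constants
      intro r
      have h1 : ∀ n, cfc (extFun K (ContinuousMap.const K r)) (T n) = algebraMap ℂ _ r := fun n =>
        (cfc_congr fun z hz => extFun_eq _ (hspec n hz)).trans (cfc_const r (T n) (ha := hTn n))
      have h2 : cfc (extFun K (ContinuousMap.const K r)) L = algebraMap ℂ _ r :=
        (cfc_congr fun z hz => extFun_eq _ (hspecL hz)).trans (cfc_const r L (ha := hLn))
      simp only [h1, h2]
      exact StrictTendsto.refl _
    · -- identity
      have h1 : ∀ n, cfc (extFun K (ContinuousMap.restrict K (ContinuousMap.id ℂ))) (T n)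
          = T n := fun n =>
        (cfc_congr fun z hz => extFun_eq _ (hspec n hz)).trans (cfc_id ℂ (T n) (ha := hTn n))
      have h2 : cfc (extFun K (ContinuousMap.restrict K (ContinuousMap.id ℂ))) L = L :=
        (cfc_congr fun z hz => extFun_eq _ (hspecL hz)).trans (cfc_id ℂ L (ha := hLn))
      simp only [h1, h2]
      exact hstrict
    · -- star of identity
      have h1 : ∀ n, cfc (extFun K (star (ContinuousMap.restrict K (ContinuousMap.id ℂ)))) (T n)
          = star (T n) := fun n =>
        (cfc_congr fun z hz => extFun_eq _ (hspec n hz)).trans (cfc_star_id (a := T n) (ha := hTn n))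
      have h2 : cfc (extFun K (star (ContinuousMap.restrict K (ContinuousMap.id ℂ)))) L
          = star L :=
        (cfc_congr fun z hz => extFun_eq _ (hspecL hz)).trans (cfc_star_id (a := L) (ha := hLn))
      simp only [h1, h2]
      exact hstrict.star
    · -- addition
      intro g₁ g₂ hg₁ hg₂
      have h1 : ∀ n, cfc (extFun K (g₁ + g₂)) (T n)
          = cfc (extFun K g₁) (T n) + cfc (extFun K g₂) (T n) := fun n => by
        rw [extFun_add]
        exact cfc_add (a := T n) (extFun K g₁) (extFun K g₂) (hf := hcT g₁ n) (hg := hcT g₂ n)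
      have h2 : cfc (extFun K (g₁ + g₂)) L = cfc (extFun K g₁) L + cfc (extFun K g₂) L := by
        rw [extFun_add]
        exact cfc_add (a := L) (extFun K g₁) (extFun K g₂) (hf := hcL g₁) (hg := hcL g₂)
      simp only [h1, h2]
      exact hg₁.add hg₂
    · -- multiplication
      intro g₁ g₂ hg₁ hg₂
      have h1 : ∀ n, cfc (extFun K (g₁ * g₂)) (T n)
          = cfc (extFun K g₁) (T n) * cfc (extFun K g₂) (T n) := fun n => by
        rw [extFun_mul]
        exact cfc_mul (extFun K g₁) (extFun K g₂) (T n) (hf := hcT g₁ n) (hg := hcT g₂ n)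
      have h2 : cfc (extFun K (g₁ * g₂)) L = cfc (extFun K g₁) L * cfc (extFun K g₂) L := by
        rw [extFun_mul]
        exact cfc_mul (extFun K g₁) (extFun K g₂) L (hf := hcL g₁) (hg := hcL g₂)
      simp only [h1, h2]
      refine hg₁.mul hg₂ (M := max ‖g₁‖ ‖g₂‖) (fun n => ?_) (fun n => ?_)
      · exact (hnorm g₁ (T n) (hTn n) (hspec n)).trans (le_max_left _ _)
      · exact (hnorm g₂ (T n) (hTn n) (hspec n)).trans (le_max_right _ _)
    · -- closure under uniform limits
      intro g hg
      refine strict_close (fun ε hε => ?_)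
      obtain ⟨g', hg'P, hg'd⟩ := (hg.and_eventually (Metric.closedBall_mem_nhds g hε)).exists
      have hgg' : ‖g - g'‖ ≤ ε := by
        rw [← dist_eq_norm]
        rwa [dist_comm] at hg'd
      have hb : ∀ (x : 𝓜(ℂ, A)), IsStarNormal x → spectrum ℂ x ⊆ K →
          ‖cfc (extFun K g) x - cfc (extFun K g') x‖ ≤ ε := by
        intro x hx hsp
        have hsub : cfc (extFun K g) x - cfc (extFun K g') x = cfc (extFun K (g - g')) x := by
          rw [extFun_sub]
          exact (cfc_sub (extFun K g) (extFun K g') x (hf := (extFun_continuousOn g).mono hsp)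
            (hg := (extFun_continuousOn g').mono hsp)).symm
        rw [hsub]
        exact (hnorm (g - g') x hx hsp).trans hgg'
      exact ⟨fun n => cfc (extFun K g') (T n), cfc (extFun K g') L, hg'P,
        fun n => hb (T n) (hTn n) (hspec n), hb L hLn hspecL⟩
  have hfr : Continuous (K.restrict f) := continuousOn_iff_continuous_restrict.mp hf
  let F : C(K, ℂ) := ⟨K.restrict f, hfr⟩
  have h1 : ∀ n, cfc f (T n) = cfc (extFun K F) (T n) := fun n =>
    cfc_congr fun z hz => (extFun_eq F (hspec n hz)).symm
  have h2 : cfc f L = cfc (extFun K F) L :=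
    cfc_congr fun z hz => (extFun_eq F (hspecL hz)).symm
  simp only [h1, h2]
  exact key F
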